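/- Let T be a tree that is branch-complete (every maximal chain has a greatest element) and rooted. Then with the coarse wedge topology, T is compact. (Via Alexander's subbase lemma applied to the subbase of wedges V_t = {x : x ≥ t} with t minimal or of successor height, and their complements.) -/

import Mathlib

/-- A tree: a partial order in which the set of strict predecessors of every
element is well-ordered. -/
def IsTree (α : Type*) [PartialOrder α] : Prop :=
  ∀ t : α, IsWellOrder {s : α // s < t} (fun a b => (a : α) < b)

/-- `t` is minimal (height 0) or lies on a successor level, i.e. its
(well-ordered) set of strict predecessors is empty or has a greatest
element (an immediate predecessor). -/
def MinimalOrSuccessorLevel {α : Type*} [PartialOrder α] (t : α) : Prop :=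
  (∀ s : α, ¬ s < t) ∨ ∃ p : α, p < t ∧ ∀ s : α, s < t → s ≤ p

/-- The coarse wedge topology: generated by the subbase of all wedges
`V t = Ici t` and their complements, for `t` minimal or on a successor
level. -/
def coarseWedgeTopology (α : Type*) [PartialOrder α] : TopologicalSpace α :=
  TopologicalSpace.generateFrom
    {S | ∃ t : α, MinimalOrSuccessorLevel t ∧ (S = Set.Ici t ∨ S = (Set.Ici t)ᶜ)}

/-- In a tree, two elements below a common element are comparable. -/
lemma tree_comparable {α : Type*} [PartialOrder α] (htree : IsTree α)
    {a b x : α} (ha : a ≤ x) (hb : b ≤ x) : a ≤ b ∨ b ≤ a := by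
  rcases eq_or_lt_of_le ha with rfl | ha'
  · exact Or.inr hb
  rcases eq_or_lt_of_le hb with rfl | hb'
  · exact Or.inl ha
  have := htree x
  rcases @trichotomous _ (fun a b : {s : α // s < x} => (a : α) < b) this.toTrichotomous
      ⟨a, ha'⟩ ⟨b, hb'⟩ with h | h | h
  · exact Or.inl h.le
  · exact Or.inl (le_of_eq (congrArg Subtype.val h))
  · exact Or.inr h.le

theorem stmt_16 {α : Type*} [PartialOrder α] [τ : TopologicalSpace α]
    (hτ : τ = coarseWedgeTopology α) (htree : IsTree α)
    (hsup : ∀ C : Set α, C.Nonempty → IsChain (· ≤ ·) C →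
      (∃ b, b ∈ upperBounds C) → ∃ s, IsLUB C s)
    (hroot : ∃ r : α, ∀ t : α, r ≤ t)
    (hbc : ∀ B : Set α, IsChain (· ≤ ·) B →
      (∀ C : Set α, IsChain (· ≤ ·) C → B ⊆ C → B = C) →
      ∃ m ∈ B, ∀ b ∈ B, b ≤ m) :
    CompactSpace α := by
  subst hτ
  obtain ⟨r, hr⟩ := hroot
  letI : TopologicalSpace α := coarseWedgeTopology α
  apply CompactSpace.mk
  rw [isCompact_iff_ultrafilter_le_nhds]
  intro F _
  -- the set of wedge-anchors in the ultrafilter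
  set D : Set α := {t | Set.Ici t ∈ F} with hD
  have hrD : r ∈ D := by
    have : Set.Ici r = Set.univ := Set.eq_univ_of_forall fun x => hr x
    simp only [hD, Set.mem_setOf_eq, this]
    exact Filter.univ_mem
  -- D is a chain
  have hchain : IsChain (· ≤ ·) D := by
    intro a ha b hb _
    have hmem : Set.Ici a ∩ Set.Ici b ∈ F := F.toFilter.inter_mem ha hb
    obtain ⟨x, hxa, hxb⟩ := Ultrafilter.nonempty_of_mem hmem
    exact tree_comparable htree hxa hxb
  -- D is bounded above
  have hbdd : ∃ b, b ∈ upperBounds D := by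
    obtain ⟨M, hM, hDM⟩ := hchain.exists_maxChain
    obtain ⟨m, hmM, hm⟩ := hbc M hM.1 fun C hC hMC => hM.2 hC hMC
    exact ⟨m, fun d hd => hm d (hDM hd)⟩
  obtain ⟨s, hs⟩ := hsup D ⟨r, hrD⟩ hchain hbdd
  have hsub : ∀ d ∈ D, d ≤ s := fun d hd => hs.1 hd
  refine ⟨s, Set.mem_univ s, ?_⟩
  rw [coarseWedgeTopology, TopologicalSpace.nhds_generateFrom]
  rw [le_iInf₂_iff]
  rintro S ⟨hsS, u, hu, hS | hS⟩ <;> subst hS <;> rw [Filter.le_principal_iff]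
  · -- S = Ici u, with u ≤ s; show Ici u ∈ F
    have hus : u ≤ s := hsS
    -- find d ∈ D with u ≤ d
    have : ∃ d ∈ D, u ≤ d := by
      by_contra h
      push_neg at h
      have hlt : ∀ d ∈ D, d < u := by
        intro d hd
        rcases tree_comparable htree (hsub d hd) hus with h1 | h1
        · exact lt_of_le_of_ne h1 (fun e => h d hd (e ▸ le_refl u))
        · exact absurd h1 (h d hd)
      rcases hu with hmin | ⟨p, hp, hpmax⟩
      · exact hmin r (hlt r hrD)
      · have : s ≤ p := hs.2 fun d hd => hpmax d (hlt d hd)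
        exact absurd (hus.trans this) hp.not_ge
    obtain ⟨d, hd, hud⟩ := this
    exact F.toFilter.mem_of_superset hd (Set.Ici_subset_Ici.mpr hud)
  · -- S = (Ici u)ᶜ, with ¬ u ≤ s; show (Ici u)ᶜ ∈ F
    have hus : ¬ u ≤ s := hsS
    exact Ultrafilter.compl_mem_iff_notMem.mpr (fun hmem => hus (hsub u hmem))
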